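/- Let ν be a lattice path from (0,0) to (a,b) whose path ν̄ = EνN has w valleys. For 1 ≤ i < j ≤ w, the polytopes Q_i and Q_j have disjoint relative interiors. More precisely, writing x_{(u,v)} for the coordinate of a flow at the edge (u,v): if j < w, then Q_i and Q_j lie in the two opposite closed half-spaces determined by the hyperplane { x : x_{(v_i,v_{i+1})} = x_{(v_j,v_{j+1})} }; and Q_i and Q_w lie in the two opposite closed half-spaces determined by the hyperplane { x : x_{(v_i,v_{i+1})} = 0 }. -/

import Mathlib

namespace FP

/-- The three possible types of an edge `(i,j)` with `i < j`. -/
inductive EdgeType : Type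
  | forward
  | backward
  | bidirectional
  deriving DecidableEq

/-- An edge is a pair of endpoints `(i,j)` (with the convention `i < j`
for well-formed graphs) together with its type. -/
abbrev GEdge : Type := ℕ × ℕ × EdgeType

/-- A directed multigraph given by a list of edges, together with a
distinguished source and sink vertex. -/
structure LGraph : Type where
  edges : List GEdge
  src : ℕ
  snk : ℕ

namespace LGraph

/-- The number of edges. -/
def m (G : LGraph) : ℕ := G.edges.length

/-- The smaller endpoint of the `e`-th edge. -/
def tail (G : LGraph) (e : Fin G.m) : ℕ := (G.edges.get e).1

/-- The larger endpoint of the `e`-th edge. -/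
def head (G : LGraph) (e : Fin G.m) : ℕ := (G.edges.get e).2.1

/-- The type of the `e`-th edge. -/
def etype (G : LGraph) (e : Fin G.m) : EdgeType := (G.edges.get e).2.2

/-- Wellformedness: the graph has vertex set `{1,…,n}` and each edge `(i,j)`
satisfies `i < j`. -/
def WF (G : LGraph) (n : ℕ) : Prop := ∀ e ∈ G.edges, 1 ≤ e.1 ∧ e.1 < e.2.1 ∧ e.2.1 ≤ n

/-- The netflow of `x` at the vertex `v`: total flow on edges `(v,k)`, `v < k`,
minus the total flow on edges `(i,v)`, `i < v`. -/
noncomputable def netflow (G : LGraph) (x : Fin G.m → ℝ) (v : ℕ) : ℝ :=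
  ∑ e : Fin G.m, ((if G.tail e = v then x e else 0) - (if G.head e = v then x e else 0))

/-- The set of `u`-flows on `G`, where `u = e_src - e_snk`: the netflow is `1` at the
source, `-1` at the sink and `0` elsewhere, flows on forward edges are nonnegative and
flows on backward edges are nonpositive (bidirectional edges unrestricted).  This is
the flow polytope `F_G ⊆ ℝ^m`. -/
def flowSet (G : LGraph) : Set (Fin G.m → ℝ) :=
  { x | (∀ v : ℕ, G.netflow x v = (if v = G.src then (1 : ℝ) else 0) - (if v = G.snk then 1 else 0))
      ∧ ∀ e : Fin G.m, (G.etype e = .forward → 0 ≤ x e) ∧ (G.etype e = .backward → x e ≤ 0) }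

/-- One step of a directed walk: forward edges can be traversed from the smaller to the
larger endpoint, backward edges from the larger to the smaller, bidirectional edges both
ways. -/
def DStep (G : LGraph) (a b : ℕ) : Prop :=
  ∃ e : Fin G.m, (G.tail e = a ∧ G.head e = b ∧ G.etype e ≠ .backward) ∨
                 (G.head e = a ∧ G.tail e = b ∧ G.etype e ≠ .forward)

/-- `G` is acyclic if it has no directed cycle. -/
def Acyclic (G : LGraph) : Prop := ∀ v : ℕ, ¬ Relation.TransGen G.DStep v v

/-- One step in the underlying undirected graph. -/
def UStep (G : LGraph) (a b : ℕ) : Prop :=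
  ∃ e : Fin G.m, (G.tail e = a ∧ G.head e = b) ∨ (G.head e = a ∧ G.tail e = b)

/-- `G` is connected (as an undirected graph on the vertex set `{1,…,n}`). -/
def Connected (G : LGraph) (n : ℕ) : Prop :=
  ∀ a b : ℕ, 1 ≤ a → a ≤ n → 1 ≤ b → b ≤ n → Relation.ReflTransGen G.UStep a b

/-- The starting vertex of a traversal step `(e, d)`: `d = true` means the edge `e` is
traversed from its smaller to its larger endpoint. -/
def sv (G : LGraph) (s : Fin G.m × Bool) : ℕ := if s.2 then G.tail s.1 else G.head s.1

/-- The ending vertex of a traversal step. -/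
def ev (G : LGraph) (s : Fin G.m × Bool) : ℕ := if s.2 then G.head s.1 else G.tail s.1

/-- A route of `G`: a directed path from the source to the sink (not repeating edges),
traversing each edge in a direction allowed by its type. -/
structure Route (G : LGraph) : Type where
  steps : List (Fin G.m × Bool)
  ne : steps ≠ []
  chain : steps.Chain' (fun s t => G.ev s = G.sv t)
  first : G.sv (steps.head ne) = G.src
  last : G.ev (steps.getLast ne) = G.snk
  dir : ∀ s ∈ steps, (s.2 = true → G.etype s.1 ≠ .backward) ∧ (s.2 = false → G.etype s.1 ≠ .forward)
  nodup : (steps.map Prod.fst).Nodup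

/-- The signed characteristic vector of a route: `+1` on edges traversed from smaller to
larger endpoint, `-1` on edges traversed from larger to smaller endpoint, `0` on unused
edges. -/
noncomputable def Route.vec {G : LGraph} (R : Route G) : Fin G.m → ℝ := fun e =>
  if (e, true) ∈ R.steps then 1 else if (e, false) ∈ R.steps then -1 else 0

end LGraph

/-- A point of `ℝ^α` is a lattice point if all its coordinates are integers. -/
def IsLatticePt {α : Type*} (x : α → ℝ) : Prop := ∀ i, ∃ z : ℤ, x i = (z : ℝ)

/-- Integral equivalence of two subsets `P ⊆ ℝ^α`, `Q ⊆ ℝ^β`: an affine map `φ` restricting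
to a bijection from `P` onto `Q` and to a bijection between the lattice points of the
affine hull of `P` and those of the affine hull of `Q`. -/
def IntEquiv {α β : Type*} (P : Set (α → ℝ)) (Q : Set (β → ℝ)) : Prop :=
  ∃ φ : (α → ℝ) →ᵃ[ℝ] (β → ℝ),
    Set.BijOn φ P Q ∧
    Set.BijOn φ ({x | IsLatticePt x} ∩ (affineSpan ℝ P : Set (α → ℝ)))
                ({x | IsLatticePt x} ∩ (affineSpan ℝ Q : Set (β → ℝ)))

/-! ### Lattice paths and the canonical indexing -/

/-- A lattice path is a list of letters, `true` = E-step `(1,0)`, `false` = N-step `(0,1)`.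
`ovl ν` is the path `ν̄ = E ν N`. -/
def ovl (ν : List Bool) : List Bool := true :: ν ++ [false]

/-- Auxiliary function for the canonical indexing: `prev` is the previous letter,
`k` is the last index used. -/
def canonIdxAux : List Bool → Bool → ℕ → List ℕ
  | [], _, _ => []
  | c :: rest, prev, k =>
    if prev && !c then k :: canonIdxAux rest c k
    else (k + 1) :: canonIdxAux rest c (k + 1)

/-- The canonical indexing of a word in `{E,N}`: reading left to right, each letter
receives the next positive integer, except that the first `N` of a maximal run of `N`s
receives the index of the immediately preceding `E` step. -/
def canonIdx (w : List Bool) : List ℕ := canonIdxAux w false 0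

/-- The letter at position `p` (`true` = E). -/
def letterAt (w : List Bool) (p : ℕ) : Bool := w.getD p false

/-- The canonical index of the letter at position `p`. -/
def idxAt (w : List Bool) (p : ℕ) : ℕ := (canonIdx w).getD p 0

/-- The largest canonical index `n` of the word `w`. -/
def nIdx (w : List Bool) : ℕ := idxAt w (w.length - 1)

/-- The set `I` of indices of E steps. -/
def Iset (w : List Bool) : Finset ℕ :=
  (((List.range w.length).filter (fun p => letterAt w p)).map (idxAt w)).toFinset

/-- The set `J` of indices of N steps. -/
def Jset (w : List Bool) : Finset ℕ :=
  (((List.range w.length).filter (fun p => !letterAt w p)).map (idxAt w)).toFinset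

/-- The set `I ∩ J` of indices of valleys. -/
def Vset (w : List Bool) : Finset ℕ := Iset w ∩ Jset w

/-- The valleys `v_1 < v_2 < ⋯ < v_w` as a sorted list. -/
def valleyList (w : List Bool) : List ℕ := (Vset w).sort (· ≤ ·)

/-- The number `w` of valleys. -/
def numVal (w : List Bool) : ℕ := (valleyList w).length

/-- The `k`-th valley `v_k` (`1 ≤ k ≤ numVal w`). -/
def vv (w : List Bool) (k : ℕ) : ℕ := (valleyList w).getD (k - 1) 0

/-! ### The ν-graph, its bidirectional version and partial augmentations -/

/-- `(i,j)` is an edge of the ν-graph iff `E_i ⋯ N_j` is a consecutive subword of `w`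
whose only valleys are `E_k N_k` with `k = i` or `k = j`. -/
def isNuEdgeB (w : List Bool) (i j : ℕ) : Bool :=
  (List.range w.length).any fun p =>
    (List.range w.length).any fun q =>
      decide (p < q) && letterAt w p && !letterAt w q &&
      decide (idxAt w p = i) && decide (idxAt w q = j) &&
      ((List.range w.length).all fun r =>
        !(decide (p ≤ r) && decide (r + 1 ≤ q) && letterAt w r && !letterAt w (r + 1)) ||
        decide (idxAt w r = i) || decide (idxAt w r = j))

/-- The list of edges `(i,j)`, `i < j`, of the ν-graph `G(ν)` (where `w = ν̄`). -/
def nuEdgePairs (w : List Bool) : List (ℕ × ℕ) :=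
  ((List.range (nIdx w + 1)).flatMap fun i =>
    (List.range (nIdx w + 1)).map fun j => (i, j)).filter
    fun p => decide (p.1 < p.2) && isNuEdgeB w p.1 p.2

/-- The edges of `G(ν)`, all forward. -/
def Gedges (w : List Bool) : List GEdge :=
  (nuEdgePairs w).map fun p => (p.1, p.2, EdgeType.forward)

/-- The edges of the bidirectional ν-graph `G_B(ν)`: an edge is bidirectional exactly
when both of its endpoints lie in `I ∩ J`. -/
def GBedges (w : List Bool) : List GEdge :=
  (nuEdgePairs w).map fun p =>
    (p.1, p.2, if p.1 ∈ Vset w ∧ p.2 ∈ Vset w then EdgeType.bidirectional else EdgeType.forward)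

/-- Out-degree of a vertex in an edge list: the number of edges traversable out of `v`. -/
def outDegL (E : List GEdge) (v : ℕ) : ℕ :=
  (E.filter fun e => (decide (e.1 = v) && decide (e.2.2 ≠ EdgeType.backward)) ||
                     (decide (e.2.1 = v) && decide (e.2.2 ≠ EdgeType.forward))).length

/-- In-degree of a vertex in an edge list: the number of edges traversable into `v`. -/
def inDegL (E : List GEdge) (v : ℕ) : ℕ :=
  (E.filter fun e => (decide (e.2.1 = v) && decide (e.2.2 ≠ EdgeType.backward)) ||
                     (decide (e.1 = v) && decide (e.2.2 ≠ EdgeType.forward))).length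

/-- The full augmentation of an edge list on inner vertices `1,…,n`: add a source `s = 0`
and a sink `t = n+1` together with forward edges `(s,i)` and `(i,t)` for all `i`. -/
def fullAug (n : ℕ) (E : List GEdge) : List GEdge :=
  E ++ ((List.range n).map fun i => (0, i + 1, EdgeType.forward))
    ++ ((List.range n).map fun i => (i + 1, n + 1, EdgeType.forward))

/-- The partial augmentation: the full augmentation with the edges `(s,i)` for which `i`
has out-degree one, and the edges `(j,t)` for which `j` has in-degree one, removed. -/
def partAug (n : ℕ) (E : List GEdge) : List GEdge :=
  E ++ ((List.range n).filterMap fun i =>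
          if outDegL (fullAug n E) (i + 1) = 1 then none else some (0, i + 1, EdgeType.forward))
    ++ ((List.range n).filterMap fun j =>
          if inDegL (fullAug n E) (j + 1) = 1 then none else some (j + 1, n + 1, EdgeType.forward))

/-- The graph `G̃_B(ν)`: the partial augmentation of the bidirectional ν-graph, with
source `s = 0` and sink `t = n+1`. -/
def GBt (w : List Bool) : LGraph := ⟨partAug (nIdx w) (GBedges w), 0, nIdx w + 1⟩

/-- The graph `G̃(ν)`: the partial augmentation of the ν-graph. -/
def Gt (w : List Bool) : LGraph := ⟨partAug (nIdx w) (Gedges w), 0, nIdx w + 1⟩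

/-- The edges of the graph `G(ν,k)`: the bidirectional path of `G_B(ν)` is replaced by
`C_ν(k)`, i.e. all edges are made forward, the forward edge `(v_k, v_{k+1})` is removed
and the backward edge `(v_1, v_w)` is added when `k < w` (for `k = w` nothing changes). -/
def GnuIedges (w : List Bool) (k : ℕ) : List GEdge :=
  ((nuEdgePairs w).filterMap fun p =>
    if k < numVal w ∧ p = (vv w k, vv w (k + 1)) then none
    else some (p.1, p.2, EdgeType.forward))
  ++ (if k < numVal w then [(vv w 1, vv w (numVal w), EdgeType.backward)] else [])

/-- The graph `G̃(ν,k)`: the partial augmentation of `G(ν,k)`. -/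
def Gnut (w : List Bool) (k : ℕ) : LGraph := ⟨partAug (nIdx w) (GnuIedges w k), 0, nIdx w + 1⟩

/-- All candidate edges on the vertex set `{0,1,…,n+1}`. -/
def allCand (n : ℕ) : List GEdge :=
  (List.range (n + 2)).flatMap fun a =>
    (List.range (n + 2)).flatMap fun b =>
      [(a, b, EdgeType.forward), (a, b, EdgeType.backward), (a, b, EdgeType.bidirectional)]

/-- The intersection `∩_{k ∈ S} G̃(ν,k)` of the partial augmentations of the graphs
`G(ν,k)`, `k ∈ S`, as a graph with source `0` and sink `n+1`. -/
def interGraph (w : List Bool) (S : Finset ℕ) : LGraph :=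
  ⟨(allCand (nIdx w)).filter fun e =>
      decide (∀ k ∈ S, e ∈ partAug (nIdx w) (GnuIedges w k)), 0, nIdx w + 1⟩

/-! ### The polytopes `Q_i` -/

/-- The condition on a route of `G̃_B(ν)` defining `Q_k` (`1 ≤ k < w`): the route does not
traverse the bidirectional edge `(v_k, v_{k+1})` forward, and traverses it backward
whenever it traverses any bidirectional edge backward. -/
def QRoute (w : List Bool) (k : ℕ) (R : LGraph.Route (GBt w)) : Prop :=
  (∀ e : Fin (GBt w).m, (GBt w).tail e = vv w k → (GBt w).head e = vv w (k + 1) →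
      (e, true) ∉ R.steps) ∧
  ((∃ s ∈ R.steps, s.2 = false) →
      ∃ e : Fin (GBt w).m, (GBt w).tail e = vv w k ∧ (GBt w).head e = vv w (k + 1) ∧
        (e, false) ∈ R.steps)

/-- The polytope `Q_k` for `1 ≤ k ≤ w`.  For `k < w` it is the convex hull of the signed
characteristic vectors of the routes satisfying `QRoute`, and `Q_w` is the flow polytope
`F_{G̃(ν)}` viewed inside `F_{G̃_B(ν)}` (the nonnegative flows). -/
def Qset (w : List Bool) (k : ℕ) : Set (Fin (GBt w).m → ℝ) :=
  if k = numVal w then { x ∈ (GBt w).flowSet | ∀ e, 0 ≤ x e }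
  else convexHull ℝ { x | ∃ R : LGraph.Route (GBt w), QRoute w k R ∧ x = R.vec }

/-! ### Products of simplices -/

/-- The `i`-th standard basis vector. -/
def stdBasisVec {α : Type*} [DecidableEq α] (i : α) : α → ℝ := fun k => if k = i then 1 else 0

/-- The product of simplices `Δ_a × Δ_b = conv{(e_i, e_j)} ⊆ ℝ^{a+1} × ℝ^{b+1}`. -/
def prodSimplices (a b : ℕ) : Set ((Fin (a + 1) ⊕ Fin (b + 1)) → ℝ) :=
  convexHull ℝ { x | ∃ (i : Fin (a + 1)) (j : Fin (b + 1)),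
    x = Sum.elim (stdBasisVec i) (stdBasisVec j) }

/-! ### Arcs and (I,J)-trees -/

/-- An arc on `w`: a pair `(i,j)` with `i ∈ I` and `j ∈ J`. -/
def IsArc (w : List Bool) (p : ℕ × ℕ) : Prop := p.1 ∈ Iset w ∧ p.2 ∈ Jset w

/-- The six configurations in which the arcs `(i,j) = p` and `(i',j') = q` cyclically
cross. -/
def CycCrossRaw (p q : ℕ × ℕ) : Prop :=
  (p.1 < q.1 ∧ q.1 < p.2 ∧ p.2 < q.2) ∨   -- i < i' < j < j'
  (q.2 < p.1 ∧ p.1 < q.1 ∧ q.1 < p.2) ∨   -- j' < i < i' < j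
  (p.2 < q.2 ∧ q.2 < p.1 ∧ p.1 < q.1) ∨   -- j < j' < i < i'
  (q.1 < p.2 ∧ p.2 < q.2 ∧ q.2 < p.1) ∨   -- i' < j < j' < i
  (p.1 < q.2 ∧ q.2 < q.1 ∧ q.1 < p.2) ∨   -- i < j' < i' < j
  (p.2 < p.1 ∧ p.1 < q.2 ∧ q.2 < q.1)     -- j < i < j' < i'

/-- Two arcs cyclically cross (up to swapping the roles of the two arcs). -/
def CycCross (p q : ℕ × ℕ) : Prop := CycCrossRaw p q ∨ CycCrossRaw q p

/-- A cyclic (I,J)-forest: a set of pairwise cyclically non-crossing arcs. -/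
def CycForest (w : List Bool) (F : Set (ℕ × ℕ)) : Prop :=
  (∀ p ∈ F, IsArc w p) ∧ ∀ p ∈ F, ∀ q ∈ F, p ≠ q → ¬ CycCross p q

/-- A cyclic (I,J)-tree: a maximal cyclic (I,J)-forest. -/
def CycTree (w : List Bool) (T : Set (ℕ × ℕ)) : Prop :=
  CycForest w T ∧ ∀ T', CycForest w T' → T ⊆ T' → T' = T

/-- An increasing (I,J)-forest: a cyclic (I,J)-forest all of whose arcs are increasing
or minimal. -/
def IncForest (w : List Bool) (F : Set (ℕ × ℕ)) : Prop :=
  CycForest w F ∧ ∀ p ∈ F, p.1 ≤ p.2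

/-- An increasing (I,J)-tree: a maximal increasing (I,J)-forest. -/
def IncTree (w : List Bool) (T : Set (ℕ × ℕ)) : Prop :=
  IncForest w T ∧ ∀ T', IncForest w T' → T ⊆ T' → T' = T

/-- Two edges `(a,b)` and `(c,d)` with `a < b`, `c < d` cross if `a < c < b < d` or
`c < a < d < b`. -/
def CrossE (p q : ℕ × ℕ) : Prop :=
  (p.1 < q.1 ∧ q.1 < p.2 ∧ p.2 < q.2) ∨ (q.1 < p.1 ∧ p.1 < q.2 ∧ q.2 < p.2)

/-- A graph on `I ∪ J` whose edges `(i,j)` satisfy `i ∈ I`, `j ∈ J`, `i < j`, which is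
alternating (every vertex is a source or a sink) and non-crossing. -/
def AltNC (w : List Bool) (H : Set (ℕ × ℕ)) : Prop :=
  (∀ p ∈ H, p.1 ∈ Iset w ∧ p.2 ∈ Jset w ∧ p.1 < p.2) ∧
  (∀ v : ℕ, (∀ p ∈ H, p.2 ≠ v) ∨ (∀ p ∈ H, p.1 ≠ v)) ∧
  (∀ p ∈ H, ∀ q ∈ H, p ≠ q → ¬ CrossE p q)

/-- The set `D_ν̄`: maximal alternating non-crossing graphs. -/
def Dnu (w : List Bool) (H : Set (ℕ × ℕ)) : Prop :=
  AltNC w H ∧ ∀ H', AltNC w H' → H ⊆ H' → H' = H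

/-- A maximal arc: `(1,n)`, or an arc `(i,j)` with `j < i` and no index strictly
between `j` and `i`. -/
def MaxArc (w : List Bool) (p : ℕ × ℕ) : Prop :=
  (p.1 = 1 ∧ p.2 = nIdx w) ∨
  (p.2 < p.1 ∧ ∀ k ∈ Iset w ∪ Jset w, ¬ (p.2 < k ∧ k < p.1))

/-! ### Cyclic peaks and rotations -/

/-- The positions `r` of the (non-wrap-around) cyclic peaks: `N` at `r` and `E` at `r+1`. -/
def peakPositions (w : List Bool) : List ℕ :=
  (List.range w.length).filter fun r => !letterAt w r && letterAt w (r + 1)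

/-- The position of the `E` step of the `l`-th cyclic peak (`1 ≤ l ≤ w`); the `w`-th
cyclic peak is the wrap-around peak, whose `E` step is at position `0`. -/
def shiftPos (w : List Bool) (l : ℕ) : ℕ :=
  if l = numVal w then 0 else (peakPositions w).getD (l - 1) 0 + 1

/-- The word `ν̄(l)` obtained by cyclically shifting `w = ν̄` to start at the `E` step of
the `l`-th cyclic peak. -/
def rotWord (w : List Bool) (l : ℕ) : List Bool :=
  w.drop (shiftPos w l) ++ w.take (shiftPos w l)

/-- The effect of the rotation on positions. -/
def rotPos (w : List Bool) (l : ℕ) (p : ℕ) : ℕ :=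
  (p + w.length - shiftPos w l) % w.length

/-- The position of the `E` step with index `i`. -/
def Epos (w : List Bool) (i : ℕ) : ℕ :=
  (((List.range w.length).filter fun p => letterAt w p && decide (idxAt w p = i))).headD 0

/-- The position of the `N` step with index `j`. -/
def Npos (w : List Bool) (j : ℕ) : ℕ :=
  (((List.range w.length).filter fun p => !letterAt w p && decide (idxAt w p = j))).headD 0

/-- The map induced on arcs by the cyclic rotation taking `ν̄` to `ν̄(l)`. -/
def arcMap (w : List Bool) (l : ℕ) (p : ℕ × ℕ) : ℕ × ℕ :=
  (idxAt (rotWord w l) (rotPos w l (Epos w p.1)),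
   idxAt (rotWord w l) (rotPos w l (Npos w p.2)))

/-- The arc determined by the `l`-th cyclic peak. -/
def peakArc (w : List Bool) (l : ℕ) : ℕ × ℕ :=
  if l = numVal w then (1, nIdx w)
  else (idxAt w ((peakPositions w).getD (l - 1) 0 + 1), idxAt w ((peakPositions w).getD (l - 1) 0))


/-! ### Auxiliary lemmas -/

section Canon

lemma canonIdxAux_cons (c : Bool) (rest : List Bool) (prev : Bool) (k : ℕ) :
    canonIdxAux (c :: rest) prev k =
      (if prev && !c then k else k + 1) ::
        canonIdxAux rest c (if prev && !c then k else k + 1) := by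
  by_cases h : prev && !c <;> simp [canonIdxAux, h]

lemma length_canonIdxAux (l : List Bool) : ∀ prev k, (canonIdxAux l prev k).length = l.length := by
  induction l with
  | nil => intro _ _; rfl
  | cons c rest ih => intro prev k; rw [canonIdxAux_cons]; simp [ih]

lemma canonIdxAux_getD_succ (l : List Bool) : ∀ prev k p, p + 1 < l.length →
    (canonIdxAux l prev k).getD (p+1) 0 =
      (if l.getD p false && !(l.getD (p+1) false) then 0 else 1) +
        (canonIdxAux l prev k).getD p 0 := by
  induction l with
  | nil => intro _ _ p h; simp at h
  | cons c rest ih =>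
    intro prev k p h
    rw [canonIdxAux_cons]
    match p with
    | 0 =>
      match rest, h with
      | c' :: rest', _ =>
        rw [canonIdxAux_cons]
        simp only [List.getD_cons_succ, List.getD_cons_zero]
        by_cases hb : c && !c' <;> simp [hb] <;> split <;> omega
    | Nat.succ p =>
      have h' : p + 1 < rest.length := by simpa using h
      simpa using ih c _ p h'

lemma idxAt_succ (w : List Bool) (p : ℕ) (h : p + 1 < w.length) :
    idxAt w (p+1) = (if letterAt w p && !(letterAt w (p+1)) then 0 else 1) + idxAt w p :=
  canonIdxAux_getD_succ w false 0 p h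

lemma idxAt_zero (c : Bool) (rest : List Bool) : idxAt (c :: rest) 0 = 1 := by
  show (canonIdxAux (c :: rest) false 0).getD 0 0 = 1
  rw [canonIdxAux_cons]; simp

lemma idxAt_le_succ (w : List Bool) (p : ℕ) (h : p + 1 < w.length) :
    idxAt w p ≤ idxAt w (p+1) := by
  rw [idxAt_succ w p h]; split <;> omega

lemma idxAt_mono (w : List Bool) : ∀ {p q : ℕ}, p ≤ q → q < w.length → idxAt w p ≤ idxAt w q := by
  intro p q hpq hq
  induction q with
  | zero => cases Nat.le_zero.mp hpq; exact le_refl _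
  | succ q ih =>
    rcases Nat.eq_or_lt_of_le hpq with rfl | hlt
    · exact le_refl _
    · exact le_trans (ih (Nat.lt_succ_iff.mp hlt) (by omega)) (idxAt_le_succ w q hq)

lemma one_le_idxAt (w : List Bool) (hw : w ≠ []) {p : ℕ} (hp : p < w.length) :
    1 ≤ idxAt w p := by
  obtain ⟨c, rest, rfl⟩ : ∃ c rest, w = c :: rest := by
    cases w with
    | nil => exact absurd rfl hw
    | cons c rest => exact ⟨c, rest, rfl⟩
  have := idxAt_mono (c :: rest) (Nat.zero_le p) hp
  rwa [idxAt_zero] at this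

lemma idxAt_le_nIdx (w : List Bool) {p : ℕ} (hp : p < w.length) : idxAt w p ≤ nIdx w :=
  idxAt_mono w (by omega) (by omega)

lemma mem_Iset (w : List Bool) {m : ℕ} :
    m ∈ Iset w ↔ ∃ p, p < w.length ∧ letterAt w p = true ∧ idxAt w p = m := by
  simp only [Iset, List.mem_toFinset, List.mem_map, List.mem_filter, List.mem_range]
  constructor
  · rintro ⟨p, ⟨h1, h2⟩, h3⟩; exact ⟨p, h1, h2, h3⟩
  · rintro ⟨p, h1, h2, h3⟩; exact ⟨p, ⟨h1, h2⟩, h3⟩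

lemma mem_Jset (w : List Bool) {m : ℕ} :
    m ∈ Jset w ↔ ∃ p, p < w.length ∧ letterAt w p = false ∧ idxAt w p = m := by
  simp only [Jset, List.mem_toFinset, List.mem_map, List.mem_filter, List.mem_range,
    Bool.not_eq_true']
  constructor
  · rintro ⟨p, ⟨h1, h2⟩, h3⟩; exact ⟨p, h1, h2, h3⟩
  · rintro ⟨p, h1, h2, h3⟩; exact ⟨p, ⟨h1, h2⟩, h3⟩

lemma idx_eq_of_valley (w : List Bool) {r : ℕ} (h : r + 1 < w.length)
    (hE : letterAt w r = true) (hN : letterAt w (r+1) = false) :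
    idxAt w (r+1) = idxAt w r := by
  rw [idxAt_succ w r h, hE, hN]; simp

lemma idx_succ_of_not_valley (w : List Bool) {r : ℕ} (h : r + 1 < w.length)
    (hnot : ¬(letterAt w r = true ∧ letterAt w (r+1) = false)) :
    idxAt w (r+1) = idxAt w r + 1 := by
  rw [idxAt_succ w r h]
  have : (letterAt w r && !(letterAt w (r+1))) = false := by
    cases hr : letterAt w r <;> cases hr1 : letterAt w (r+1) <;> simp_all
  rw [this]; simp [Nat.add_comm]

lemma mem_Vset_of_valley (w : List Bool) {r : ℕ} (h : r + 1 < w.length)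
    (hE : letterAt w r = true) (hN : letterAt w (r+1) = false) :
    idxAt w r ∈ Vset w :=
  Finset.mem_inter.mpr ⟨(mem_Iset w).mpr ⟨r, by omega, hE, rfl⟩,
    (mem_Jset w).mpr ⟨r+1, h, hN, idx_eq_of_valley w h hE hN⟩⟩

lemma exists_valley_of_mem_Vset (w : List Bool) {m : ℕ} (hm : m ∈ Vset w) :
    ∃ r, r + 1 < w.length ∧ letterAt w r = true ∧ letterAt w (r+1) = false ∧
      idxAt w r = m ∧ idxAt w (r+1) = m := by
  obtain ⟨hmI, hmJ⟩ := Finset.mem_inter.mp hm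
  obtain ⟨p, hp, hpE, hpidx⟩ := (mem_Iset w).mp hmI
  obtain ⟨q, hq, hqN, hqidx⟩ := (mem_Jset w).mp hmJ
  have hpq : p ≠ q := by rintro rfl; rw [hpE] at hqN; exact Bool.noConfusion hqN
  have hplt : p < q := by
    rcases Nat.lt_or_ge p q with h | h
    · exact h
    · exfalso
      have hqp : q < p := lt_of_le_of_ne h (Ne.symm hpq)
      have hstep : idxAt w (q+1) = idxAt w q + 1 :=
        idx_succ_of_not_valley w (by omega) (by rw [hqN]; simp)
      have : idxAt w (q+1) ≤ idxAt w p := idxAt_mono w (by omega) hp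
      omega
  have hq1 : q = p + 1 := by
    by_contra hne
    have hplt1 : p + 1 < q := by omega
    have h1 : idxAt w (p+1) ≤ m := by rw [← hqidx]; exact idxAt_mono w (by omega) hq
    have h2 : m ≤ idxAt w (p+1) := by rw [← hpidx]; exact idxAt_mono w (by omega) (by omega)
    have hpm : idxAt w (p+1) = m := le_antisymm h1 h2
    have hval : letterAt w (p+1) = false := by
      by_contra hEE
      have : idxAt w (p+1) = idxAt w p + 1 :=
        idx_succ_of_not_valley w (by omega) (by tauto)
      omega
    have hstep2 : idxAt w (p+2) = idxAt w (p+1) + 1 :=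
      idx_succ_of_not_valley w (by omega) (by rw [hval]; simp)
    have : idxAt w (p+2) ≤ m := by rw [← hqidx]; exact idxAt_mono w (by omega) hq
    omega
  subst hq1
  exact ⟨p, by omega, hpE, hqN, hpidx, hqidx⟩

end Canon

section Valleys

lemma valleyList_length (w : List Bool) : (valleyList w).length = numVal w := rfl

lemma vv_mem (w : List Bool) {k : ℕ} (h1 : 1 ≤ k) (hk : k ≤ numVal w) : vv w k ∈ Vset w := by
  have hlt : k - 1 < (valleyList w).length := by rw [valleyList_length]; omega
  rw [vv, List.getD_eq_getElem _ _ hlt]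
  exact (Finset.mem_sort _).mp (List.getElem_mem hlt)

lemma vv_strict (w : List Bool) {k k' : ℕ} (h1 : 1 ≤ k) (hkk : k < k') (hk' : k' ≤ numVal w) :
    vv w k < vv w k' := by
  have hs := (Finset.sortedLT_sort (Vset w)).strictMono_get
  have h1' : k - 1 < (valleyList w).length := by rw [valleyList_length]; omega
  have h2' : k' - 1 < (valleyList w).length := by rw [valleyList_length]; omega
  rw [vv, vv, List.getD_eq_getElem _ _ h1', List.getD_eq_getElem _ _ h2']
  have := hs (show (⟨k-1, h1'⟩ : Fin _) < ⟨k'-1, h2'⟩ by simp [Fin.lt_def]; omega)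
  exact this

lemma vset_between (w : List Bool) {m k : ℕ} (h1 : 1 ≤ k) (hk : k < numVal w)
    (hm : m ∈ Vset w) (hlo : vv w k ≤ m) (hhi : m ≤ vv w (k+1)) :
    m = vv w k ∨ m = vv w (k+1) := by
  have hs := (Finset.sortedLT_sort (Vset w)).strictMono_get
  have hmem : m ∈ valleyList w := (Finset.mem_sort _).mpr hm
  obtain ⟨t, ht, hteq⟩ := List.getElem_of_mem hmem
  have hteq' : (valleyList w).getD t 0 = m := by
    rw [List.getD_eq_getElem _ _ ht]; exact hteq
  have hmono : ∀ (a b : ℕ), a < b → b < (valleyList w).length →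
      (valleyList w).getD a 0 < (valleyList w).getD b 0 := by
    intro a b hab hb
    rw [List.getD_eq_getElem _ _ (Nat.lt_trans hab hb),
      List.getD_eq_getElem _ _ hb]
    have := hs (show (⟨a, Nat.lt_trans hab hb⟩ : Fin _) < ⟨b, hb⟩ by simp [Fin.lt_def]; omega)
    exact this
  have hk1 : k - 1 < (valleyList w).length := by rw [valleyList_length]; omega
  have hk2 : k + 1 - 1 < (valleyList w).length := by rw [valleyList_length]; omega
  have hvvk : vv w k = (valleyList w).getD (k-1) 0 := rfl
  have hvvk1 : vv w (k+1) = (valleyList w).getD (k+1-1) 0 := rfl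
  rcases Nat.lt_trichotomy t (k-1) with h | h | h
  · exact absurd (hmono t (k-1) h hk1) (by omega)
  · left; rw [hvvk, ← h, hteq']
  · rcases Nat.lt_trichotomy t (k+1-1) with h' | h' | h'
    · exfalso; omega
    · right; rw [hvvk1, ← h', hteq']
    · exact absurd (hmono (k+1-1) t h' ht) (by omega)

end Valleys

section Graphs

lemma isNuEdgeB_iff (w : List Bool) (i j : ℕ) :
    isNuEdgeB w i j = true ↔
      ∃ p, p < w.length ∧ ∃ q, q < w.length ∧ p < q ∧ letterAt w p = true ∧
        letterAt w q = false ∧ idxAt w p = i ∧ idxAt w q = j ∧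
        ∀ r, r < w.length → p ≤ r → r + 1 ≤ q → letterAt w r = true →
          letterAt w (r+1) = false → idxAt w r = i ∨ idxAt w r = j := by
  simp only [isNuEdgeB, List.any_eq_true, List.all_eq_true, List.mem_range,
    Bool.and_eq_true, Bool.or_eq_true, Bool.not_eq_true', decide_eq_true_eq]
  constructor
  · rintro ⟨p, hp, q, hq, ⟨⟨⟨⟨h1, h2⟩, h3⟩, h4⟩, h5⟩, h6⟩
    refine ⟨p, hp, q, hq, h1, h2, h3, h4, h5, ?_⟩
    intro r hr hpr hrq hEr hNr
    rcases h6 r hr with (h | h) | h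
    · simp [hpr, hrq, hEr, hNr] at h
    · exact Or.inl h
    · exact Or.inr h
  · rintro ⟨p, hp, q, hq, h1, h2, h3, h4, h5, h6⟩
    refine ⟨p, hp, q, hq, ⟨⟨⟨⟨h1, h2⟩, h3⟩, h4⟩, h5⟩, ?_⟩
    intro r hr
    by_cases hc : p ≤ r ∧ r + 1 ≤ q ∧ letterAt w r = true ∧ letterAt w (r+1) = false
    · rcases h6 r hr hc.1 hc.2.1 hc.2.2.1 hc.2.2.2 with h | h
      · exact Or.inl (Or.inr h)
      · exact Or.inr h
    · left; left
      by_contra hne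
      have hbt : (decide (p ≤ r) && decide (r+1 ≤ q) && letterAt w r && !letterAt w (r+1)) = true := by
        revert hne
        cases (decide (p ≤ r) && decide (r+1 ≤ q) && letterAt w r && !letterAt w (r+1)) <;> simp
      simp only [Bool.and_eq_true, Bool.not_eq_true', decide_eq_true_eq] at hbt
      exact hc ⟨hbt.1.1.1, hbt.1.1.2, hbt.1.2, hbt.2⟩

lemma vset_bounds (w : List Bool) (hw : w ≠ []) {m : ℕ} (hm : m ∈ Vset w) :
    1 ≤ m ∧ m ≤ nIdx w := by
  obtain ⟨p, hp, _, hidx⟩ := (mem_Iset w).mp (Finset.mem_of_mem_inter_left hm)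
  exact ⟨hidx ▸ one_le_idxAt w hw hp, hidx ▸ idxAt_le_nIdx w hp⟩

lemma mem_nuEdgePairs_iff (w : List Bool) {i j : ℕ} :
    (i, j) ∈ nuEdgePairs w ↔
      i < nIdx w + 1 ∧ j < nIdx w + 1 ∧ i < j ∧ isNuEdgeB w i j = true := by
  unfold nuEdgePairs
  rw [List.mem_filter]
  simp only [List.mem_flatMap, List.mem_map, List.mem_range, Bool.and_eq_true,
    decide_eq_true_eq]
  constructor
  · rintro ⟨⟨a, ha, b, hb, heq⟩, h1, h2⟩
    obtain ⟨rfl, rfl⟩ : a = i ∧ b = j := by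
      have h1 := congrArg Prod.fst heq
      have h2 := congrArg Prod.snd heq
      simp only [] at h1 h2
      exact ⟨h1, h2⟩
    exact ⟨ha, hb, h1, h2⟩
  · rintro ⟨h1, h2, h3, h4⟩
    exact ⟨⟨i, h1, j, h2, rfl⟩, h3, h4⟩

lemma mem_nuEdgePairs_bounds {w : List Bool} (hw : w ≠ []) {i j : ℕ}
    (hij : (i, j) ∈ nuEdgePairs w) : 1 ≤ i ∧ i < j ∧ j ≤ nIdx w := by
  obtain ⟨h1, h2, h3, h4⟩ := (mem_nuEdgePairs_iff w).mp hij
  obtain ⟨p, hp, q, hq, _, hE, _, hidx, _, _⟩ := (isNuEdgeB_iff w i j).mp h4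
  exact ⟨hidx ▸ one_le_idxAt w hw hp, h3, by omega⟩

lemma cons_valley_nuEdge (w : List Bool) (hw : w ≠ []) {k : ℕ} (h1 : 1 ≤ k)
    (hk : k < numVal w) : (vv w k, vv w (k+1)) ∈ nuEdgePairs w := by
  have hvkV : vv w k ∈ Vset w := vv_mem w h1 (le_of_lt hk)
  have hvk1V : vv w (k+1) ∈ Vset w := vv_mem w (by omega) hk
  have hlt : vv w k < vv w (k+1) := vv_strict w h1 (Nat.lt_succ_self k) hk
  obtain ⟨r, hr, hrE, hrN, hridx, hridx1⟩ := exists_valley_of_mem_Vset w hvkV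
  obtain ⟨r', hr', hrE', hrN', hridx', hridx1'⟩ := exists_valley_of_mem_Vset w hvk1V
  have hrr : r ≤ r' := by
    by_contra hcon
    have : idxAt w r' ≤ idxAt w r := idxAt_mono w (by omega) (by omega)
    omega
  rw [mem_nuEdgePairs_iff]
  have hb1 := vset_bounds w hw hvkV
  have hb2 := vset_bounds w hw hvk1V
  refine ⟨by omega, by omega, hlt, (isNuEdgeB_iff w _ _).mpr ?_⟩
  refine ⟨r, by omega, r'+1, hr', by omega, hrE, hrN', hridx, hridx1', ?_⟩
  intro s hs hps hsq hEs hNs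
  have hsV : idxAt w s ∈ Vset w := mem_Vset_of_valley w (by omega) hEs hNs
  have hlo : vv w k ≤ idxAt w s := hridx ▸ idxAt_mono w hps hs
  have hhi : idxAt w s ≤ vv w (k+1) := by
    have h' : idxAt w (s+1) ≤ idxAt w (r'+1) := idxAt_mono w hsq hr'
    have := idx_eq_of_valley w (by omega) hEs hNs
    omega
  exact vset_between w h1 hk hsV hlo hhi

lemma bidir_edge_mem_GBedges (w : List Bool) (hw : w ≠ []) {k : ℕ} (h1 : 1 ≤ k)
    (hk : k < numVal w) :
    (vv w k, vv w (k+1), EdgeType.bidirectional) ∈ GBedges w := by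
  unfold GBedges
  rw [List.mem_map]
  refine ⟨(vv w k, vv w (k+1)), cons_valley_nuEdge w hw h1 hk, ?_⟩
  rw [if_pos ⟨vv_mem w h1 (le_of_lt hk), vv_mem w (by omega) hk⟩]

end Graphs

section Aug

lemma two_le_length_of_mem {α : Type*} [DecidableEq α] {l : List α} {a b : α}
    (ha : a ∈ l) (hb : b ∈ l) (hab : a ≠ b) : 2 ≤ l.length := by
  calc 2 = ({a, b} : Finset α).card := (Finset.card_pair hab).symm
    _ ≤ l.toFinset.card := Finset.card_le_card (by
        intro x hx
        rcases Finset.mem_insert.mp hx with rfl | hx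
        · exact List.mem_toFinset.mpr ha
        · rw [Finset.mem_singleton] at hx; subst hx; exact List.mem_toFinset.mpr hb)
    _ ≤ l.length := List.toFinset_card_le l

lemma mem_partAug_left {n : ℕ} {E : List GEdge} {e : GEdge} (h : e ∈ E) : e ∈ partAug n E :=
  List.mem_append_left _ (List.mem_append_left _ h)

lemma src_edge_mem_partAug {n : ℕ} {E : List GEdge} {v : ℕ} (h1 : 1 ≤ v) (h2 : v ≤ n)
    (hdeg : outDegL (fullAug n E) v ≠ 1) : (0, v, EdgeType.forward) ∈ partAug n E := by
  apply List.mem_append_left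
  apply List.mem_append_right
  rw [List.mem_filterMap]
  refine ⟨v - 1, List.mem_range.mpr (by omega), ?_⟩
  rw [show v - 1 + 1 = v by omega, if_neg hdeg]

lemma snk_edge_mem_partAug {n : ℕ} {E : List GEdge} {v : ℕ} (h1 : 1 ≤ v) (h2 : v ≤ n)
    (hdeg : inDegL (fullAug n E) v ≠ 1) : (v, n + 1, EdgeType.forward) ∈ partAug n E := by
  apply List.mem_append_right
  rw [List.mem_filterMap]
  refine ⟨v - 1, List.mem_range.mpr (by omega), ?_⟩
  rw [show v - 1 + 1 = v by omega, if_neg hdeg]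

lemma outDeg_valley_ne_one (w : List Bool) (hw : w ≠ []) {k : ℕ} (h1 : 1 ≤ k)
    (hk : k < numVal w) :
    outDegL (fullAug (nIdx w) (GBedges w)) (vv w (k+1)) ≠ 1 := by
  have hb := vset_bounds w hw (vv_mem w (k := k+1) (by omega) hk)
  have hem : (vv w k, vv w (k+1), EdgeType.bidirectional) ∈ fullAug (nIdx w) (GBedges w) :=
    List.mem_append_left _ (List.mem_append_left _ (bidir_edge_mem_GBedges w hw h1 hk))
  have het : (vv w (k+1), nIdx w + 1, EdgeType.forward) ∈ fullAug (nIdx w) (GBedges w) := by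
    apply List.mem_append_right
    rw [List.mem_map]
    exact ⟨vv w (k+1) - 1, List.mem_range.mpr (by omega), by
      rw [show vv w (k+1) - 1 + 1 = vv w (k+1) by omega]⟩
  intro hcon
  unfold outDegL at hcon
  have h2 : 2 ≤ (List.filter (fun e => (decide (e.1 = vv w (k+1)) &&
      decide (e.2.2 ≠ EdgeType.backward)) || (decide (e.2.1 = vv w (k+1)) &&
      decide (e.2.2 ≠ EdgeType.forward))) (fullAug (nIdx w) (GBedges w))).length := by
    apply two_le_length_of_mem (a := (vv w k, vv w (k+1), EdgeType.bidirectional))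
      (b := (vv w (k+1), nIdx w + 1, EdgeType.forward))
    · exact List.mem_filter.mpr ⟨hem, by simp⟩
    · exact List.mem_filter.mpr ⟨het, by simp⟩
    · simp
  omega

lemma inDeg_valley_ne_one (w : List Bool) (hw : w ≠ []) {k : ℕ} (h1 : 1 ≤ k)
    (hk : k < numVal w) :
    inDegL (fullAug (nIdx w) (GBedges w)) (vv w k) ≠ 1 := by
  have hb := vset_bounds w hw (vv_mem w h1 (le_of_lt hk))
  have hem : (vv w k, vv w (k+1), EdgeType.bidirectional) ∈ fullAug (nIdx w) (GBedges w) :=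
    List.mem_append_left _ (List.mem_append_left _ (bidir_edge_mem_GBedges w hw h1 hk))
  have hes : (0, vv w k, EdgeType.forward) ∈ fullAug (nIdx w) (GBedges w) := by
    apply List.mem_append_left
    apply List.mem_append_right
    rw [List.mem_map]
    exact ⟨vv w k - 1, List.mem_range.mpr (by omega), by
      rw [show vv w k - 1 + 1 = vv w k by omega]⟩
  intro hcon
  unfold inDegL at hcon
  have h2 : 2 ≤ (List.filter (fun e => (decide (e.2.1 = vv w k) &&
      decide (e.2.2 ≠ EdgeType.backward)) || (decide (e.1 = vv w k) &&
      decide (e.2.2 ≠ EdgeType.forward))) (fullAug (nIdx w) (GBedges w))).length := by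
    apply two_le_length_of_mem (a := (vv w k, vv w (k+1), EdgeType.bidirectional))
      (b := (0, vv w k, EdgeType.forward))
    · exact List.mem_filter.mpr ⟨hem, by simp⟩
    · exact List.mem_filter.mpr ⟨hes, by simp⟩
    · simp [show (0:ℕ) ≠ vv w k by omega]
  omega

lemma GBt_edges_eq (w : List Bool) : (GBt w).edges = partAug (nIdx w) (GBedges w) := rfl

lemma route_edges_mem (w : List Bool) (hw : w ≠ []) {k : ℕ} (h1 : 1 ≤ k) (hk : k < numVal w) :
    (0, vv w (k+1), EdgeType.forward) ∈ (GBt w).edges ∧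
    (vv w k, vv w (k+1), EdgeType.bidirectional) ∈ (GBt w).edges ∧
    (vv w k, nIdx w + 1, EdgeType.forward) ∈ (GBt w).edges := by
  have hb1 := vset_bounds w hw (vv_mem w h1 (le_of_lt hk))
  have hb2 := vset_bounds w hw (vv_mem w (k := k+1) (by omega) hk)
  rw [GBt_edges_eq]
  exact ⟨src_edge_mem_partAug (by omega) (by omega) (outDeg_valley_ne_one w hw h1 hk),
    mem_partAug_left (bidir_edge_mem_GBedges w hw h1 hk),
    snk_edge_mem_partAug (by omega) (by omega) (inDeg_valley_ne_one w hw h1 hk)⟩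

end Aug

section Nodup

lemma nuEdgePairs_nodup (w : List Bool) : (nuEdgePairs w).Nodup := by
  unfold nuEdgePairs
  exact List.Nodup.filter _
    (List.Nodup.product List.nodup_range List.nodup_range)

lemma map_pair_filterMap_nodup (n : ℕ) (c : ℕ → Prop) [DecidablePred c] (val : ℕ → GEdge)
    (hinj : ∀ a a' : ℕ, ((val a).1, (val a).2.1) = ((val a').1, (val a').2.1) → a = a') :
    (List.map (fun e => (e.1, e.2.1))
      ((List.range n).filterMap (fun i => if c i then none else some (val i)))).Nodup := by
  rw [List.map_filterMap]
  apply List.Nodup.filterMap ?_ (List.nodup_range (n := n))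
  intro a a' b hb hb'
  replace hb : b ∈ Option.map (fun (e : GEdge) => (e.1, e.2.1))
      (if c a then none else some (val a)) := hb
  replace hb' : b ∈ Option.map (fun (e : GEdge) => (e.1, e.2.1))
      (if c a' then none else some (val a')) := hb'
  by_cases hca : c a
  · rw [if_pos hca] at hb; simp at hb
  · by_cases hca' : c a'
    · rw [if_pos hca'] at hb'; simp at hb'
    · rw [if_neg hca, Option.map_some] at hb
      rw [if_neg hca', Option.map_some] at hb'
      rw [Option.mem_def, Option.some_inj] at hb hb'
      exact hinj a a' (hb.trans hb'.symm)

lemma mem_map_pair_filterMap {n : ℕ} {c : ℕ → Prop} [DecidablePred c] {val : ℕ → GEdge} {x : ℕ × ℕ}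
    (hx : x ∈ List.map (fun e => (e.1, e.2.1))
      ((List.range n).filterMap (fun i => if c i then none else some (val i)))) :
    ∃ i, i < n ∧ x = ((val i).1, (val i).2.1) := by
  rw [List.mem_map] at hx
  obtain ⟨e, he, rfl⟩ := hx
  rw [List.mem_filterMap] at he
  obtain ⟨i, hi, hei⟩ := he
  refine ⟨i, List.mem_range.mp hi, ?_⟩
  split at hei
  · exact absurd hei (by simp)
  · rw [Option.some_inj] at hei; rw [← hei]

lemma GBedges_map_pair (w : List Bool) :
    (GBedges w).map (fun e => (e.1, e.2.1)) = nuEdgePairs w := by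
  unfold GBedges
  rw [List.map_map]
  exact List.map_id _

lemma GBt_pairs_nodup (w : List Bool) (hw : w ≠ []) :
    (((GBt w).edges).map (fun e => (e.1, e.2.1))).Nodup := by
  show ((partAug (nIdx w) (GBedges w)).map (fun e => (e.1, e.2.1))).Nodup
  unfold partAug
  rw [List.map_append, List.map_append, GBedges_map_pair]
  rw [List.nodup_append, List.nodup_append]
  refine ⟨⟨nuEdgePairs_nodup w,
    map_pair_filterMap_nodup _ _ _ (by intro a a' h; simpa using h), ?_⟩,
    map_pair_filterMap_nodup _ _ _ (by intro a a' h; simpa using h), ?_⟩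
  · rintro x hxA _ hxB rfl
    obtain ⟨i, hi, hxeq⟩ := mem_map_pair_filterMap hxB
    obtain ⟨x1, x2⟩ := x
    have hb := mem_nuEdgePairs_bounds hw hxA
    simp only [Prod.mk.injEq] at hxeq
    omega
  · rintro x hx _ hxC rfl
    obtain ⟨jj, hj, hxeqC⟩ := mem_map_pair_filterMap hxC
    obtain ⟨x1, x2⟩ := x
    simp only [Prod.mk.injEq] at hxeqC
    rcases List.mem_append.mp hx with hxA | hxB
    · have hb := mem_nuEdgePairs_bounds hw hxA
      omega
    · obtain ⟨ii, hi, hxeqB⟩ := mem_map_pair_filterMap hxB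
      simp only [Prod.mk.injEq] at hxeqB
      omega

lemma GBt_edge_ext (w : List Bool) (hw : w ≠ []) (e e' : Fin (GBt w).m)
    (h1 : (GBt w).tail e = (GBt w).tail e') (h2 : (GBt w).head e = (GBt w).head e') :
    e = e' := by
  have hnd := GBt_pairs_nodup w hw
  simp only [LGraph.tail, LGraph.head, List.get_eq_getElem] at h1 h2
  have hl : ∀ i : Fin (GBt w).m,
      (i : ℕ) < (((GBt w).edges).map (fun e => (e.1, e.2.1))).length := by
    intro i; rw [List.length_map]; exact i.2
  have hcore : (((GBt w).edges).map (fun e => (e.1, e.2.1)))[(e:ℕ)]'(hl e)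
      = (((GBt w).edges).map (fun e => (e.1, e.2.1)))[(e':ℕ)]'(hl e') := by
    rw [List.getElem_map, List.getElem_map]
    exact Prod.ext h1 h2
  exact Fin.ext ((hnd.getElem_inj_iff).mp hcore)

end Nodup

section QsetLe

lemma ovl_ne_nil (ν : List Bool) : ovl ν ≠ [] := by simp [ovl]

lemma vec_cases {G : LGraph} (R : G.Route) (e : Fin G.m) :
    (R.vec e = 1 ∧ (e, true) ∈ R.steps) ∨
    (R.vec e = -1 ∧ (e, true) ∉ R.steps ∧ (e, false) ∈ R.steps) ∨
    (R.vec e = 0 ∧ (e, true) ∉ R.steps ∧ (e, false) ∉ R.steps) := by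
  unfold LGraph.Route.vec
  by_cases h1 : (e, true) ∈ R.steps
  · left; exact ⟨if_pos h1, h1⟩
  · by_cases h2 : (e, false) ∈ R.steps
    · right; left; rw [if_neg h1, if_pos h2]; exact ⟨rfl, h1, h2⟩
    · right; right; rw [if_neg h1, if_neg h2]; exact ⟨rfl, h1, h2⟩

lemma qroute_vec (ν : List Bool) {k : ℕ} (hk1 : 1 ≤ k) (hkw : k < numVal (ovl ν))
    {e0 : Fin (GBt (ovl ν)).m}
    (h0t : (GBt (ovl ν)).tail e0 = vv (ovl ν) k)
    (h0h : (GBt (ovl ν)).head e0 = vv (ovl ν) (k+1))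
    {R : LGraph.Route (GBt (ovl ν))} (hR : QRoute (ovl ν) k R) :
    R.vec e0 ≤ 0 ∧ ∀ e1, R.vec e0 ≤ R.vec e1 := by
  have hnot : (e0, true) ∉ R.steps := hR.1 e0 h0t h0h
  have h0 : R.vec e0 ≤ 0 := by
    unfold LGraph.Route.vec; rw [if_neg hnot]; split <;> norm_num
  refine ⟨h0, fun e1 => ?_⟩
  rcases vec_cases R e1 with ⟨hv, _⟩ | ⟨hv, _, hmem⟩ | ⟨hv, _, _⟩
  · rw [hv]; linarith
  · obtain ⟨e, het, heh, hmem'⟩ := hR.2 ⟨(e1, false), hmem, rfl⟩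
    have he : e = e0 :=
      GBt_edge_ext (ovl ν) (ovl_ne_nil ν) e e0 (by rw [het, h0t]) (by rw [heh, h0h])
    subst he
    have hveq : R.vec e = -1 := by
      unfold LGraph.Route.vec; rw [if_neg hnot, if_pos hmem']
    rw [hveq, hv]
  · rw [hv]; exact h0

lemma Qset_le (ν : List Bool) {k : ℕ} (hk1 : 1 ≤ k) (hkw : k < numVal (ovl ν))
    {e0 : Fin (GBt (ovl ν)).m}
    (h0t : (GBt (ovl ν)).tail e0 = vv (ovl ν) k)
    (h0h : (GBt (ovl ν)).head e0 = vv (ovl ν) (k+1)) :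
    ∀ x ∈ Qset (ovl ν) k, x e0 ≤ 0 ∧ ∀ e1, x e0 ≤ x e1 := by
  intro x hx
  rw [Qset, if_neg (Nat.ne_of_lt hkw)] at hx
  have hsub : {y | ∃ R : LGraph.Route (GBt (ovl ν)), QRoute (ovl ν) k R ∧ y = R.vec} ⊆
      {y : Fin (GBt (ovl ν)).m → ℝ | y e0 ≤ 0 ∧ ∀ e1, y e0 ≤ y e1} := by
    rintro y ⟨R, hR, rfl⟩
    exact qroute_vec ν hk1 hkw h0t h0h hR
  have hconv : Convex ℝ {y : Fin (GBt (ovl ν)).m → ℝ | y e0 ≤ 0 ∧ ∀ e1, y e0 ≤ y e1} := by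
    intro p hp q hq a b ha hb hab
    constructor
    · have h : a * p e0 + b * q e0 ≤ 0 := by nlinarith [hp.1, hq.1]
      simpa using h
    · intro e1
      have h := add_le_add (mul_le_mul_of_nonneg_left (hp.2 e1) ha)
        (mul_le_mul_of_nonneg_left (hq.2 e1) hb)
      simpa using h
  exact convexHull_min hsub hconv hx

end QsetLe

section Relint

lemma relint_zero {d : ℕ} {s : Set (Fin d → ℝ)} (f : (Fin d → ℝ) →ₗ[ℝ] ℝ)
    (hf : ∀ y ∈ s, f y ≤ 0) {x : Fin d → ℝ} (hx : x ∈ intrinsicInterior ℝ s)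
    (hx0 : f x = 0) : ∀ y ∈ s, f y = 0 := by
  intro y hy
  obtain ⟨x', hx', hxe⟩ := mem_intrinsicInterior.mp hx
  have hyA : y ∈ affineSpan ℝ s := subset_affineSpan ℝ s hy
  have hmem : ∀ t : ℝ, (t • ((x' : Fin d → ℝ) - y) + (x' : Fin d → ℝ))
      ∈ affineSpan ℝ s := by
    intro t
    have h := AffineSubspace.smul_vsub_vadd_mem (affineSpan ℝ s) t x'.2 hyA x'.2
    simpa [vsub_eq_sub, vadd_eq_add] using h
  set γ : ℝ → (affineSpan ℝ s : Set (Fin d → ℝ)) :=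
    fun t => ⟨t • ((x' : Fin d → ℝ) - y) + (x' : Fin d → ℝ), hmem t⟩ with hγdef
  have hγc : Continuous γ := by
    apply Continuous.subtype_mk
    exact (continuous_id.smul continuous_const).add continuous_const
  have hγ0 : γ 0 = x' := by
    apply Subtype.ext
    simp [hγdef]
  have hopen : IsOpen (γ ⁻¹' interior (Subtype.val ⁻¹' s)) :=
    isOpen_interior.preimage hγc
  have h0mem : (0 : ℝ) ∈ γ ⁻¹' interior (Subtype.val ⁻¹' s) := by
    rw [Set.mem_preimage, hγ0]; exact hx'
  obtain ⟨ε, hε, hball⟩ := Metric.isOpen_iff.mp hopen 0 h0mem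
  have htmem : (ε/2 : ℝ) ∈ γ ⁻¹' interior (Subtype.val ⁻¹' s) := by
    apply hball
    rw [Metric.mem_ball, Real.dist_eq]
    rw [sub_zero, abs_of_pos (by linarith)]
    linarith
  have hins : ((ε/2) • ((x' : Fin d → ℝ) - y) + (x' : Fin d → ℝ)) ∈ s := by
    have := interior_subset (Set.mem_preimage.mp htmem)
    exact this
  have hfle := hf _ hins
  have hfx' : f (x' : Fin d → ℝ) = 0 := by rw [hxe]; exact hx0
  rw [map_add, map_smul, map_sub, hfx'] at hfle
  have hfy : 0 ≤ f y := by
    simp only [smul_eq_mul] at hfle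
    nlinarith
  exact le_antisymm (hf y hy) hfy

end Relint

section BadRoute

lemma exists_bad_route (ν : List Bool) {k : ℕ} (hk1 : 1 ≤ k) (hkw : k < numVal (ovl ν)) :
    ∃ (em : Fin (GBt (ovl ν)).m) (R : LGraph.Route (GBt (ovl ν))),
      (GBt (ovl ν)).tail em = vv (ovl ν) k ∧
      (GBt (ovl ν)).head em = vv (ovl ν) (k+1) ∧
      QRoute (ovl ν) k R ∧ R.vec em = -1 ∧
      ∀ e1 : Fin (GBt (ovl ν)).m,
        (GBt (ovl ν)).tail e1 ≠ 0 →
        ¬((GBt (ovl ν)).tail e1 = vv (ovl ν) k ∧ (GBt (ovl ν)).head e1 = vv (ovl ν) (k+1)) →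
        (GBt (ovl ν)).head e1 ≠ nIdx (ovl ν) + 1 →
        R.vec e1 = 0 := by
  set w := ovl ν with hwdef
  have hw : w ≠ [] := ovl_ne_nil ν
  have hb1 := vset_bounds w hw (vv_mem w hk1 (le_of_lt hkw))
  have hb2 := vset_bounds w hw (vv_mem w (k := k+1) (by omega) hkw)
  have hvlt : vv w k < vv w (k+1) := vv_strict w hk1 (Nat.lt_succ_self k) hkw
  obtain ⟨hmemA, hmemB, hmemC⟩ := route_edges_mem w hw hk1 hkw
  obtain ⟨ia, ha, hAval⟩ := List.getElem_of_mem hmemA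
  obtain ⟨ib, hbb, hBval⟩ := List.getElem_of_mem hmemB
  obtain ⟨ic, hc, hCval⟩ := List.getElem_of_mem hmemC
  set es : Fin (GBt w).m := ⟨ia, ha⟩ with hesdef
  set em : Fin (GBt w).m := ⟨ib, hbb⟩ with hemdef
  set et : Fin (GBt w).m := ⟨ic, hc⟩ with hetdef
  have tes : (GBt w).tail es = 0 := by exact congrArg (·.1) hAval
  have hes : (GBt w).head es = vv w (k+1) := by exact congrArg (·.2.1) hAval
  have yes : (GBt w).etype es = EdgeType.forward := by
    exact congrArg (·.2.2) hAval
  have tem : (GBt w).tail em = vv w k := by exact congrArg (·.1) hBval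
  have hem : (GBt w).head em = vv w (k+1) := by exact congrArg (·.2.1) hBval
  have yem : (GBt w).etype em = EdgeType.bidirectional := by
    exact congrArg (·.2.2) hBval
  have tet : (GBt w).tail et = vv w k := by exact congrArg (·.1) hCval
  have het : (GBt w).head et = nIdx w + 1 := by exact congrArg (·.2.1) hCval
  have yet : (GBt w).etype et = EdgeType.forward := by
    exact congrArg (·.2.2) hCval
  have hne1 : em ≠ es := by
    intro h; rw [h] at tem; omega
  have hne2 : em ≠ et := by
    intro h; rw [h] at hem; omega
  have hne3 : es ≠ et := by
    intro h; rw [h] at tes; omega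
  refine ⟨em, ⟨[(es, true), (em, false), (et, true)], by simp, ?_, ?_, ?_, ?_, ?_⟩,
    tem, hem, ?_, ?_, ?_⟩
  · -- chain
    refine List.isChain_cons_cons.mpr ⟨?_, List.isChain_cons_cons.mpr ⟨?_, List.isChain_singleton _⟩⟩
    · show (GBt w).ev (es, true) = (GBt w).sv (em, false)
      simp [LGraph.ev, LGraph.sv, hes, hem]
    · show (GBt w).ev (em, false) = (GBt w).sv (et, true)
      simp [LGraph.ev, LGraph.sv, tem, tet]
  · -- first
    show (GBt w).sv (es, true) = (GBt w).src
    simp [LGraph.sv, tes]; rfl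
  · -- last
    show (GBt w).ev (et, true) = (GBt w).snk
    simp [LGraph.ev, het]; rfl
  · -- dir
    intro s hs
    simp only [List.mem_cons, List.not_mem_nil, or_false] at hs
    rcases hs with rfl | rfl | rfl
    · exact ⟨fun _ => by rw [yes]; simp, fun h => by simp at h⟩
    · exact ⟨fun h => by simp at h, fun _ => by rw [yem]; simp⟩
    · exact ⟨fun _ => by rw [yet]; simp, fun h => by simp at h⟩
  · -- nodup
    simp [hne1, hne2, hne3, Ne.symm hne1]
  · -- QRoute
    constructor
    · intro e hte hhe hmem
      simp only [List.mem_cons, List.not_mem_nil, or_false, Prod.mk.injEq] at hmem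
      rcases hmem with ⟨rfl, _⟩ | ⟨_, h⟩ | ⟨rfl, _⟩
      · rw [tes] at hte; omega
      · exact Bool.noConfusion h
      · rw [het] at hhe; omega
    · intro _
      exact ⟨em, tem, hem, by simp⟩
  · -- vec em = -1
    unfold LGraph.Route.vec
    rw [if_neg, if_pos]
    · simp
    · simp [hne1, hne2]
  · -- other edges vanish
    intro e1 h1 h2 h3
    unfold LGraph.Route.vec
    rw [if_neg, if_neg]
    · intro hc1
      simp only [List.mem_cons, List.not_mem_nil, or_false, Prod.mk.injEq] at hc1
      rcases hc1 with ⟨-, h⟩ | ⟨rfl, -⟩ | ⟨-, h⟩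
      · exact Bool.noConfusion h
      · exact h2 ⟨tem, hem⟩
      · exact Bool.noConfusion h
    · intro hc1
      simp only [List.mem_cons, List.not_mem_nil, or_false, Prod.mk.injEq] at hc1
      rcases hc1 with ⟨rfl, -⟩ | ⟨-, h⟩ | ⟨rfl, -⟩
      · exact h1 tes
      · exact Bool.noConfusion h
      · exact h3 het

end BadRoute
end FP

open FP in
/-- For `1 ≤ i < j ≤ w` the polytopes `Q_i` and `Q_j` have disjoint
relative interiors; more precisely, for `j < w` they lie in the two opposite closed
half-spaces of the hyperplane `x_{(v_i,v_{i+1})} = x_{(v_j,v_{j+1})}`, and `Q_i` and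
`Q_w` lie in the two opposite closed half-spaces of `x_{(v_i,v_{i+1})} = 0`. -/
theorem stmt8 (ν : List Bool) (i j : ℕ) (hi : 1 ≤ i) (hij : i < j)
    (hj : j ≤ numVal (ovl ν)) :
    Disjoint (intrinsicInterior ℝ (Qset (ovl ν) i)) (intrinsicInterior ℝ (Qset (ovl ν) j)) ∧
    (j < numVal (ovl ν) →
      ∀ ei ej : Fin (GBt (ovl ν)).m,
        (GBt (ovl ν)).tail ei = vv (ovl ν) i → (GBt (ovl ν)).head ei = vv (ovl ν) (i + 1) →
        (GBt (ovl ν)).tail ej = vv (ovl ν) j → (GBt (ovl ν)).head ej = vv (ovl ν) (j + 1) →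
        (∀ x ∈ Qset (ovl ν) i, x ei ≤ x ej) ∧ (∀ x ∈ Qset (ovl ν) j, x ej ≤ x ei)) ∧
    (j = numVal (ovl ν) →
      ∀ ei : Fin (GBt (ovl ν)).m,
        (GBt (ovl ν)).tail ei = vv (ovl ν) i → (GBt (ovl ν)).head ei = vv (ovl ν) (i + 1) →
        (∀ x ∈ Qset (ovl ν) i, x ei ≤ 0) ∧ (∀ x ∈ Qset (ovl ν) j, 0 ≤ x ei)) := by
  
  have hiw : i < numVal (ovl ν) := lt_of_lt_of_le hij hj
  have hw : ovl ν ≠ [] := ovl_ne_nil ν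
  refine ⟨?_, ?_, ?_⟩
  · -- disjoint relative interiors
    rw [Set.disjoint_left]
    intro x hxi hxj
    have hxi' : x ∈ Qset (ovl ν) i := intrinsicInterior_subset hxi
    have hxj' : x ∈ Qset (ovl ν) j := intrinsicInterior_subset hxj
    by_cases hcase : j = numVal (ovl ν)
    · obtain ⟨em, R, tem, hem, hQR, hvm, hv0⟩ := exists_bad_route ν hi hiw
      have hle : ∀ y ∈ Qset (ovl ν) i,
          (LinearMap.proj em : ((Fin (GBt (ovl ν)).m) → ℝ) →ₗ[ℝ] ℝ) y ≤ 0 :=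
        fun y hy => (Qset_le ν hi hiw tem hem y hy).1
      have hge : (0:ℝ) ≤ x em := by
        rw [Qset, if_pos hcase] at hxj'
        exact hxj'.2 em
      have hx0 : (LinearMap.proj em : ((Fin (GBt (ovl ν)).m) → ℝ) →ₗ[ℝ] ℝ) x = 0 :=
        le_antisymm (Qset_le ν hi hiw tem hem x hxi').1 hge
      have hall := relint_zero _ hle hxi hx0
      have hRmem : R.vec ∈ Qset (ovl ν) i := by
        rw [Qset, if_neg (Nat.ne_of_lt hiw)]
        exact subset_convexHull ℝ _ ⟨R, hQR, rfl⟩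
      have hz := hall _ hRmem
      rw [LinearMap.proj_apply, hvm] at hz
      norm_num at hz
    · have hjw : j < numVal (ovl ν) := lt_of_le_of_ne hj hcase
      obtain ⟨em, R, tem, hem, hQR, hvm, hv0⟩ := exists_bad_route ν (k := j) (by omega) hjw
      obtain ⟨-, hmemBi, -⟩ := route_edges_mem (ovl ν) hw hi hiw
      obtain ⟨ibi, hbi, hBival⟩ := List.getElem_of_mem hmemBi
      set eI : Fin (GBt (ovl ν)).m := ⟨ibi, hbi⟩ with heIdef
      have tei : (GBt (ovl ν)).tail eI = vv (ovl ν) i := by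
        exact congrArg (·.1) hBival
      have hei : (GBt (ovl ν)).head eI = vv (ovl ν) (i+1) := by
        exact congrArg (·.2.1) hBival
      set f : ((Fin (GBt (ovl ν)).m) → ℝ) →ₗ[ℝ] ℝ :=
        (LinearMap.proj em : ((Fin (GBt (ovl ν)).m) → ℝ) →ₗ[ℝ] ℝ) -
          (LinearMap.proj eI : ((Fin (GBt (ovl ν)).m) → ℝ) →ₗ[ℝ] ℝ) with hfdef
      have hfeval : ∀ y : (Fin (GBt (ovl ν)).m) → ℝ, f y = y em - y eI := by
        intro y; rw [hfdef, LinearMap.sub_apply, LinearMap.proj_apply, LinearMap.proj_apply]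
      have hle : ∀ y ∈ Qset (ovl ν) j, f y ≤ 0 := by
        intro y hy
        have h := (Qset_le ν (by omega) hjw tem hem y hy).2 eI
        rw [hfeval]; linarith
      have hx0 : f x = 0 := by
        have h1 := (Qset_le ν hi hiw tei hei x hxi').2 em
        have h2 := (Qset_le ν (by omega) hjw tem hem x hxj').2 eI
        rw [hfeval]; linarith
      have hall := relint_zero f hle hxj hx0
      have hRmem : R.vec ∈ Qset (ovl ν) j := by
        rw [Qset, if_neg (Nat.ne_of_lt hjw)]
        exact subset_convexHull ℝ _ ⟨R, hQR, rfl⟩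
      have hIb1 := vset_bounds _ hw (vv_mem (ovl ν) hi (le_of_lt hiw))
      have hIb2 := vset_bounds _ hw (vv_mem (ovl ν) (k := i+1) (by omega) hiw)
      have hij' : vv (ovl ν) i < vv (ovl ν) j := vv_strict _ hi hij hj
      have hvI : R.vec eI = 0 := by
        apply hv0 eI
        · rw [tei]; omega
        · rintro ⟨hA, -⟩; rw [tei] at hA; omega
        · rw [hei]; omega
      have hz := hall _ hRmem
      rw [hfeval, hvm, hvI] at hz
      norm_num at hz
  · -- separation for j < w
    intro hjw ei ej hit hih hjt hjh
    exact ⟨fun x hx => (Qset_le ν hi hiw hit hih x hx).2 ej,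
      fun x hx => (Qset_le ν (by omega) hjw hjt hjh x hx).2 ei⟩
  · -- separation for j = w
    intro hjw ei hit hih
    refine ⟨fun x hx => (Qset_le ν hi hiw hit hih x hx).1, fun x hx => ?_⟩
    rw [Qset, if_pos hjw] at hx
    exact hx.2 ei
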